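/- Let f : R^d → R be twice continuously differentiable, let θ̂, θ* ∈ R^d with θ̂ ≠ θ*, and let L > 0, β > 0 with β ≤ L‖θ̂ − θ*‖². Suppose (i) for every point θ̄ on the line segment joining θ̂ and θ*, (θ̂ − θ*)ᵀ ∇²f(θ̄) (θ̂ − θ*) ≤ 2L ‖θ̂ − θ*‖², and (ii) f(θ) ≥ f(θ̂) − β for every θ on the line segment joining θ̂ and θ*. Then ⟨∇f(θ̂), θ̂ − θ*⟩ ≤ 2 √(L β) · ‖θ̂ − θ*‖, i.e., θ̂ is a 2√(Lβ)-approximate stationary point relative to θ*. -/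

import Mathlib

open scoped RealInnerProductSpace

/-- If `f` is `C²`, the Hessian quadratic form along the segment joining
`θ̂` and `θ*` (evaluated at the direction `θ̂ - θ*`) is at most `2L‖θ̂ - θ*‖²`, and `f` does not
decrease by more than `β ≤ L‖θ̂ - θ*‖²` anywhere on that segment, then `θ̂` is a
`2√(Lβ)`-approximate stationary point of `f` relative to `θ*`, i.e.
`⟨∇f(θ̂), θ̂ - θ*⟩ ≤ 2√(Lβ)‖θ̂ - θ*‖`. -/
theorem approx_stationary_point
    {d : ℕ} (f : EuclideanSpace ℝ (Fin d) → ℝ) (hf : ContDiff ℝ 2 f)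
    (θh θs : EuclideanSpace ℝ (Fin d)) (hne : θh ≠ θs)
    (L β : ℝ) (hL : 0 < L) (hβ : 0 < β) (hβL : β ≤ L * ‖θh - θs‖ ^ 2)
    (hHess : ∀ θ ∈ segment ℝ θh θs,
      fderiv ℝ (fderiv ℝ f) θ (θh - θs) (θh - θs) ≤ 2 * L * ‖θh - θs‖ ^ 2)
    (hlow : ∀ θ ∈ segment ℝ θh θs, f θ ≥ f θh - β) :
    ⟪gradient f θh, θh - θs⟫ ≤ 2 * Real.sqrt (L * β) * ‖θh - θs‖ := by
  set v : EuclideanSpace ℝ (Fin d) := θs - θh with hv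
  have hnv : ‖θh - θs‖ = ‖v‖ := by rw [hv, norm_sub_rev]
  have hvne : v ≠ 0 := sub_ne_zero.2 (Ne.symm hne)
  have hvpos : (0:ℝ) < ‖v‖ := norm_pos_iff.2 hvne
  -- differentiability facts
  have hf1 : Differentiable ℝ f := hf.differentiable (by norm_num)
  have hf2 : Differentiable ℝ (fderiv ℝ f) :=
    (hf.fderiv_right (m := 1) (by norm_num)).differentiable (by norm_num)
  -- the path
  set γ : ℝ → EuclideanSpace ℝ (Fin d) := fun t => θh + t • v with hγdef
  have hγ : ∀ t : ℝ, HasDerivAt γ v t := by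
    intro t
    have h1 : HasDerivAt (fun t : ℝ => t • v) ((1:ℝ) • v) t :=
      (hasDerivAt_id t).smul_const v
    simpa [hγdef] using h1.const_add θh
  have hγmem : ∀ t ∈ Set.Icc (0:ℝ) 1, γ t ∈ segment ℝ θh θs := by
    intro t ht
    rw [segment_eq_image']
    exact ⟨t, ht, rfl⟩
  set g : ℝ → ℝ := fun t => f (γ t) with hgdef
  set g' : ℝ → ℝ := fun t => fderiv ℝ f (γ t) v with hg'def
  set g'' : ℝ → ℝ := fun t => fderiv ℝ (fderiv ℝ f) (γ t) v v with hg''def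
  have hg : ∀ t : ℝ, HasDerivAt g (g' t) t := fun t =>
    (hf1 (γ t)).hasFDerivAt.comp_hasDerivAt t (hγ t)
  have hg' : ∀ t : ℝ, HasDerivAt g' (g'' t) t := by
    intro t
    have hA : HasFDerivAt (fderiv ℝ f) (fderiv ℝ (fderiv ℝ f) (γ t)) (γ t) :=
      (hf2 (γ t)).hasFDerivAt
    have h2 : HasFDerivAt (fun x => fderiv ℝ f x v)
        ((ContinuousLinearMap.apply ℝ ℝ v).comp (fderiv ℝ (fderiv ℝ f) (γ t))) (γ t) :=
      (ContinuousLinearMap.apply ℝ ℝ v).hasFDerivAt.comp (γ t) hA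
    exact h2.comp_hasDerivAt t (hγ t)
  set M : ℝ := 2 * L * ‖v‖ ^ 2 with hM
  have hg''le : ∀ t ∈ Set.Icc (0:ℝ) 1, g'' t ≤ M := by
    intro t ht
    have := hHess (γ t) (hγmem t ht)
    have hvv : (θh - θs) = -v := by rw [hv]; abel
    rw [hvv] at this
    simpa [hg''def, hnv, hM] using this
  -- g' t ≤ g' 0 + M * t on [0,1]
  have step1 : ∀ t ∈ Set.Icc (0:ℝ) 1, g' t ≤ g' 0 + M * t := by
    have hψ : ∀ s : ℝ, HasDerivAt (fun s => g' s - g' 0 - M * s) (g'' s - M) s := by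
      intro s
      exact (((hg' s).sub_const (g' 0)).sub ((hasDerivAt_id s).const_mul M)).congr_deriv (by ring)
    have hanti : AntitoneOn (fun s => g' s - g' 0 - M * s) (Set.Icc 0 1) := by
      apply antitoneOn_of_deriv_nonpos (convex_Icc 0 1)
      · exact fun s _ => ((hψ s).continuousAt).continuousWithinAt
      · exact fun s _ => ((hψ s).differentiableAt).differentiableWithinAt
      · intro s hs
        rw [(hψ s).deriv]
        have hs' : s ∈ Set.Icc (0:ℝ) 1 := interior_subset hs
        linarith [hg''le s hs']
    intro t ht
    have h0 : (0:ℝ) ∈ Set.Icc (0:ℝ) 1 := by norm_num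
    have := hanti h0 ht ht.1
    simp only at this
    nlinarith [this]
  -- g t ≤ g 0 + g' 0 * t + M/2 * t² on [0,1]
  have step2 : ∀ t ∈ Set.Icc (0:ℝ) 1, g t ≤ g 0 + g' 0 * t + M / 2 * t ^ 2 := by
    have hφ : ∀ s : ℝ, HasDerivAt (fun s => g s - g' 0 * s - M / 2 * s ^ 2)
        (g' s - g' 0 - M * s) s := by
      intro s
      have h1 : HasDerivAt (fun s : ℝ => M / 2 * s ^ 2) (M / 2 * (2 * s)) s := by
        exact ((hasDerivAt_pow 2 s).const_mul (M / 2)).congr_deriv (by ring)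
      have := ((hg s).sub ((hasDerivAt_id s).const_mul (g' 0))).sub h1
      exact this.congr_deriv (by ring)
    have hanti : AntitoneOn (fun s => g s - g' 0 * s - M / 2 * s ^ 2) (Set.Icc 0 1) := by
      apply antitoneOn_of_deriv_nonpos (convex_Icc 0 1)
      · exact fun s _ => ((hφ s).continuousAt).continuousWithinAt
      · exact fun s _ => ((hφ s).differentiableAt).differentiableWithinAt
      · intro s hs
        rw [(hφ s).deriv]
        have hs' : s ∈ Set.Icc (0:ℝ) 1 := interior_subset hs
        linarith [step1 s hs']
    intro t ht
    have h0 : (0:ℝ) ∈ Set.Icc (0:ℝ) 1 := by norm_num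
    have := hanti h0 ht ht.1
    simp only at this
    nlinarith [this]
  -- lower bound: g t ≥ g 0 - β
  have hγ0 : γ 0 = θh := by simp [hγdef]
  have hlow' : ∀ t ∈ Set.Icc (0:ℝ) 1, g 0 - β ≤ g t := by
    intro t ht
    have := hlow (γ t) (hγmem t ht)
    simpa [hgdef, hγ0] using this
  -- the key inequality for a fixed t ∈ (0,1]
  have key : ∀ t : ℝ, 0 < t → t ≤ 1 → -(g' 0) ≤ β / t + L * ‖v‖ ^ 2 * t := by
    intro t ht0 ht1
    have htI : t ∈ Set.Icc (0:ℝ) 1 := ⟨le_of_lt ht0, ht1⟩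
    have h1 := step2 t htI
    have h2 := hlow' t htI
    have h3 : -β ≤ g' 0 * t + M / 2 * t ^ 2 := by linarith
    rw [hM] at h3
    rw [div_add' _ _ _ (ne_of_gt ht0), le_div_iff₀ ht0]
    nlinarith
  -- gradient vs g' 0
  have hgrad : ⟪gradient f θh, θh - θs⟫ = -(g' 0) := by
    have hG : HasGradientAt f (gradient f θh) θh := (hf1 θh).hasGradientAt
    have hF : HasFDerivAt f (InnerProductSpace.toDual ℝ _ (gradient f θh)) θh := hG
    have : fderiv ℝ f θh = InnerProductSpace.toDual ℝ _ (gradient f θh) := hF.fderiv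
    have h0 : g' 0 = fderiv ℝ f θh v := by rw [hg'def]; simp [hγ0]
    rw [h0, this]
    have hvv : (θh - θs) = -v := by rw [hv]; abel
    rw [hvv]
    simp [real_inner_comm]
  -- choose t = √(β / (L‖v‖²))
  set t : ℝ := Real.sqrt (β / (L * ‖v‖ ^ 2)) with htdef
  clear_value t
  have hden : (0:ℝ) < L * ‖v‖ ^ 2 := by positivity
  have ht0 : 0 < t := htdef ▸ Real.sqrt_pos.2 (div_pos hβ hden)
  have ht1 : t ≤ 1 := by
    rw [htdef]
    rw [show (1:ℝ) = Real.sqrt 1 by simp]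
    apply Real.sqrt_le_sqrt
    rw [div_le_one hden]
    rw [hnv] at hβL; exact hβL
  have hval : β / t + L * ‖v‖ ^ 2 * t = 2 * Real.sqrt (L * β) * ‖v‖ := by
    have ht2 : t ^ 2 = β / (L * ‖v‖ ^ 2) := htdef ▸ Real.sq_sqrt (le_of_lt (div_pos hβ hden))
    have h1 : L * ‖v‖ ^ 2 * t ^ 2 = β := by
      rw [ht2]; field_simp
    have hb : β / t = L * ‖v‖ ^ 2 * t := by
      rw [div_eq_iff (ne_of_gt ht0)]; linear_combination -h1
    have hs : Real.sqrt (L * β) = L * ‖v‖ * t := by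
      rw [show L * β = (L * ‖v‖ * t) ^ 2 by linear_combination (-L) * h1]
      exact Real.sqrt_sq (by positivity)
    rw [hb, hs]; ring
  have := key t ht0 ht1
  rw [hgrad, hnv]
  calc -(g' 0) ≤ β / t + L * ‖v‖ ^ 2 * t := this
    _ = 2 * Real.sqrt (L * β) * ‖v‖ := hval
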